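/- arXiv:2410.09532 — 2 statements merged into one kernel-verified Lean document; each statement's English description precedes it below -/
import Mathlib

section
/- The standard α-Hölder triangle T_α = {(x,y) ∈ ℝ² : 0 ≤ x ≤ 1, 0 ≤ y ≤ x^α}, for α ≥ 1, is Lipschitz normally embedded: there is a constant C ≥ 1 such that for all p, q ∈ T_α, the inner distance in T_α between p and q is at most C·‖p − q‖. -/
/-- The inner (length) distance on a subset `X ⊆ ℝⁿ`. -/
noncomputable def innerDist {n : ℕ} (X : Set (EuclideanSpace ℝ (Fin n)))
    (x y : EuclideanSpace ℝ (Fin n)) : ENNReal :=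
  ⨅ γ : {γ : ℝ → EuclideanSpace ℝ (Fin n) //
      γ 0 = x ∧ γ 1 = y ∧ ContinuousOn γ (Set.Icc 0 1) ∧ ∀ t ∈ Set.Icc (0:ℝ) 1, γ t ∈ X},
    eVariationOn γ.1 (Set.Icc 0 1)

/-- The standard `α`-Hölder triangle `T_α = {(x,y) : 0 ≤ x ≤ 1, 0 ≤ y ≤ x^α}` in `ℝ²`. -/
def holderTriangle (α : ℝ) : Set (EuclideanSpace ℝ (Fin 2)) :=
  {p | 0 ≤ p 0 ∧ p 0 ≤ 1 ∧ 0 ≤ p 1 ∧ p 1 ≤ p 0 ^ α}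

/-- Clamp a real number to `[0,1]`. -/
noncomputable def LNE.clamp (a : ℝ) : ℝ := min 1 (max a 0)

namespace LNE

lemma clamp_nonneg (a : ℝ) : 0 ≤ clamp a :=
  le_min zero_le_one (le_max_right _ _)

lemma clamp_le_one (a : ℝ) : clamp a ≤ 1 := min_le_left _ _

lemma clamp_of_nonpos {a : ℝ} (h : a ≤ 0) : clamp a = 0 := by
  simp [clamp, max_eq_right h]

lemma clamp_of_one_le {a : ℝ} (h : 1 ≤ a) : clamp a = 1 := by
  have h0 : (0:ℝ) ≤ a := zero_le_one.trans h
  simp [clamp, max_eq_left h0, min_eq_left h]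

lemma pos_of_clamp_ne {a : ℝ} (h : clamp a ≠ 0) : 0 < a := by
  by_contra hc
  exact h (clamp_of_nonpos (le_of_not_gt hc))

lemma clamp_lip (a b : ℝ) : |clamp a - clamp b| ≤ |a - b| := by
  refine (abs_min_sub_min_le_max _ _ _ _).trans (max_le ?_ ?_)
  · simpa using abs_nonneg (a - b)
  · exact abs_max_sub_max_le_abs a b 0

/-- The three-segment path in the Hölder triangle. -/
noncomputable def path (x1 y1 x2 y2 t : ℝ) : EuclideanSpace ℝ (Fin 2) :=
  (WithLp.equiv 2 (Fin 2 → ℝ)).symm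
    ![x1 + clamp (3*t - 1) * (x2 - x1),
      y1 + clamp (3*t) * (min y1 y2 - y1) + clamp (3*t - 2) * (y2 - min y1 y2)]

lemma path_apply0 (x1 y1 x2 y2 t : ℝ) :
    path x1 y1 x2 y2 t 0 = x1 + clamp (3*t - 1) * (x2 - x1) := rfl

lemma path_apply1 (x1 y1 x2 y2 t : ℝ) :
    path x1 y1 x2 y2 t 1
      = y1 + clamp (3*t) * (min y1 y2 - y1) + clamp (3*t - 2) * (y2 - min y1 y2) := rfl

lemma path_mem {α x1 y1 x2 y2 : ℝ} (hα0 : 0 ≤ α) (hx1a : 0 ≤ x1) (hx1b : x1 ≤ 1)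
    (hy1b : y1 ≤ x1 ^ α) (hx2a : 0 ≤ x2) (hx2b : x2 ≤ 1)
    (hy2b : y2 ≤ x2 ^ α) (hm0 : 0 ≤ min y1 y2) (t : ℝ) :
    path x1 y1 x2 y2 t ∈ holderTriangle α := by
  set m := min y1 y2 with hm
  have hmy1 : m ≤ y1 := min_le_left _ _
  have hmy2 : m ≤ y2 := min_le_right _ _
  have hb0 := clamp_nonneg (3*t - 1)
  have hb1 := clamp_le_one (3*t - 1)
  have ha0 := clamp_nonneg (3*t)
  have ha1 := clamp_le_one (3*t)
  have hc0 := clamp_nonneg (3*t - 2)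
  have hc1 := clamp_le_one (3*t - 2)
  simp only [holderTriangle, Set.mem_setOf_eq, path_apply0, path_apply1, ← hm]
  refine ⟨?_, ?_, ?_, ?_⟩
  · nlinarith
  · nlinarith
  · nlinarith
  · by_cases hc : clamp (3*t - 2) = 0
    · by_cases hb : clamp (3*t - 1) = 0
      · rw [hb, hc]
        have : x1 + 0 * (x2 - x1) = x1 := by ring
        rw [this]
        have : y1 + clamp (3*t) * (m - y1) + 0 * (y2 - m) ≤ y1 := by nlinarith
        exact this.trans hy1b
      · have hbpos := pos_of_clamp_ne hb
        have ha : clamp (3*t) = 1 := clamp_of_one_le (by linarith)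
        rw [hc, ha]
        have hyval : y1 + 1 * (m - y1) + 0 * (y2 - m) = m := by ring
        rw [hyval]
        have hminx : 0 ≤ min x1 x2 := le_min hx1a hx2a
        have hminle : min x1 x2 ≤ x1 + clamp (3*t - 1) * (x2 - x1) := by
          rcases le_total x1 x2 with h | h
          · rw [min_eq_left h]; nlinarith
          · rw [min_eq_right h]; nlinarith
        have hmle : m ≤ (min x1 x2) ^ α := by
          rcases le_total x1 x2 with h | h
          · rw [min_eq_left h]; exact hmy1.trans hy1b
          · rw [min_eq_right h]; exact hmy2.trans hy2b
        exact hmle.trans (Real.rpow_le_rpow hminx hminle hα0)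
    · have hcpos := pos_of_clamp_ne hc
      have hb : clamp (3*t - 1) = 1 := clamp_of_one_le (by linarith)
      have ha : clamp (3*t) = 1 := clamp_of_one_le (by linarith)
      rw [hb, ha]
      have hxval : x1 + 1 * (x2 - x1) = x2 := by ring
      rw [hxval]
      have : y1 + 1 * (m - y1) + clamp (3*t - 2) * (y2 - m) ≤ y2 := by nlinarith
      exact this.trans hy2b

end LNE

set_option maxHeartbeats 1000000

open LNE in
/-- The standard `α`-Hölder triangle, `α ≥ 1`, is Lipschitz normally embedded:
there is `C ≥ 1` with `d_inn(p,q) ≤ C‖p − q‖` for all `p, q ∈ T_α`. -/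
theorem holderTriangle_isLNE (α : ℝ) (hα : 1 ≤ α) :
    ∃ C : ℝ, 1 ≤ C ∧ ∀ p ∈ holderTriangle α, ∀ q ∈ holderTriangle α,
      innerDist (holderTriangle α) p q ≤ ENNReal.ofReal (C * ‖p - q‖) := by
  refine ⟨3, by norm_num, ?_⟩
  rintro p ⟨hx1a, hx1b, hy1a, hy1b⟩ q ⟨hx2a, hx2b, hy2a, hy2b⟩
  set x1 := p 0 with hX1
  set y1 := p 1 with hY1
  set x2 := q 0 with hX2
  set y2 := q 1 with hY2
  set m := min y1 y2 with hm
  have hmy1 : m ≤ y1 := min_le_left _ _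
  have hmy2 : m ≤ y2 := min_le_right _ _
  have hm0 : 0 ≤ m := le_min hy1a hy2a
  set γ : ℝ → EuclideanSpace ℝ (Fin 2) := path x1 y1 x2 y2 with hγ
  have hα0 : (0:ℝ) ≤ α := zero_le_one.trans hα
  -- Lipschitz constant
  set K : NNReal := 3 * ‖p - q‖₊ with hK
  have hpq0 : (p - q) 0 = x1 - x2 := rfl
  have hpq1 : (p - q) 1 = y1 - y2 := rfl
  have hnorm : ‖p - q‖ = Real.sqrt ((x1 - x2)^2 + (y1 - y2)^2) := by
    rw [EuclideanSpace.norm_eq, Fin.sum_univ_two, hpq0, hpq1]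
    simp [Real.norm_eq_abs, sq_abs]
  have hKval : (K : ℝ) = 3 * Real.sqrt ((x1 - x2)^2 + (y1 - y2)^2) := by
    rw [hK]
    push_cast
    rw [hnorm]
  -- Lipschitz estimate
  have hlip : LipschitzWith K γ := by
    apply LipschitzWith.of_dist_le_mul
    intro s t
    have hXd : |γ s 0 - γ t 0| ≤ 3 * |s - t| * |x1 - x2| := by
      rw [hγ, path_apply0, path_apply0]
      have h1 : (x1 + clamp (3*s - 1) * (x2 - x1)) - (x1 + clamp (3*t - 1) * (x2 - x1))
          = (clamp (3*s - 1) - clamp (3*t - 1)) * (x2 - x1) := by ring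
      rw [h1, abs_mul]
      have h2 : |clamp (3*s - 1) - clamp (3*t - 1)| ≤ 3 * |s - t| := by
        refine (clamp_lip _ _).trans ?_
        have : (3*s - 1) - (3*t - 1) = 3 * (s - t) := by ring
        rw [this, abs_mul]
        simp [abs_of_nonneg]
      calc |clamp (3*s - 1) - clamp (3*t - 1)| * |x2 - x1|
          ≤ (3 * |s - t|) * |x2 - x1| :=
            mul_le_mul_of_nonneg_right h2 (abs_nonneg _)
        _ = 3 * |s - t| * |x1 - x2| := by rw [abs_sub_comm x2 x1]
    have hsumy : (y1 - m) + (y2 - m) = |y1 - y2| := by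
      rcases le_total y1 y2 with h | h
      · rw [hm, min_eq_left h, abs_of_nonpos (by linarith)]; ring
      · rw [hm, min_eq_right h, abs_of_nonneg (by linarith)]; ring
    have hYd : |γ s 1 - γ t 1| ≤ 3 * |s - t| * |y1 - y2| := by
      rw [hγ, path_apply1, path_apply1]
      have h1 : (y1 + clamp (3*s) * (m - y1) + clamp (3*s - 2) * (y2 - m))
          - (y1 + clamp (3*t) * (m - y1) + clamp (3*t - 2) * (y2 - m))
          = (clamp (3*s) - clamp (3*t)) * (m - y1)
            + (clamp (3*s - 2) - clamp (3*t - 2)) * (y2 - m) := by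
        rw [hm]; ring
      rw [show min y1 y2 = m from rfl, h1]
      have h2 : |clamp (3*s) - clamp (3*t)| ≤ 3 * |s - t| := by
        refine (clamp_lip _ _).trans ?_
        have : (3*s) - (3*t) = 3 * (s - t) := by ring
        rw [this, abs_mul]; simp [abs_of_nonneg]
      have h3 : |clamp (3*s - 2) - clamp (3*t - 2)| ≤ 3 * |s - t| := by
        refine (clamp_lip _ _).trans ?_
        have : (3*s - 2) - (3*t - 2) = 3 * (s - t) := by ring
        rw [this, abs_mul]; simp [abs_of_nonneg]
      calc |(clamp (3*s) - clamp (3*t)) * (m - y1)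
            + (clamp (3*s - 2) - clamp (3*t - 2)) * (y2 - m)|
          ≤ |clamp (3*s) - clamp (3*t)| * |m - y1|
            + |clamp (3*s - 2) - clamp (3*t - 2)| * |y2 - m| := by
            refine (abs_add_le _ _).trans ?_
            rw [abs_mul, abs_mul]
        _ ≤ (3 * |s - t|) * |m - y1| + (3 * |s - t|) * |y2 - m| :=
            add_le_add (mul_le_mul_of_nonneg_right h2 (abs_nonneg _))
              (mul_le_mul_of_nonneg_right h3 (abs_nonneg _))
        _ = 3 * |s - t| * ((y1 - m) + (y2 - m)) := by
            rw [abs_of_nonpos (by linarith : m - y1 ≤ 0),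
              abs_of_nonneg (by linarith : (0:ℝ) ≤ y2 - m)]
            ring
        _ = 3 * |s - t| * |y1 - y2| := by rw [hsumy]
    rw [EuclideanSpace.dist_eq, Fin.sum_univ_two, Real.dist_eq, Real.dist_eq, Real.dist_eq,
      hKval]
    have hstn : (0:ℝ) ≤ |s - t| := abs_nonneg _
    have key : |γ s 0 - γ t 0| ^ 2 + |γ s 1 - γ t 1| ^ 2
        ≤ (3 * Real.sqrt ((x1 - x2)^2 + (y1 - y2)^2) * |s - t|) ^ 2 := by
      have e1 : |γ s 0 - γ t 0| ^ 2 ≤ (3 * |s - t| * |x1 - x2|) ^ 2 :=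
        pow_le_pow_left₀ (abs_nonneg _) hXd 2
      have e2 : |γ s 1 - γ t 1| ^ 2 ≤ (3 * |s - t| * |y1 - y2|) ^ 2 :=
        pow_le_pow_left₀ (abs_nonneg _) hYd 2
      have hs : Real.sqrt ((x1 - x2)^2 + (y1 - y2)^2) ^ 2
          = (x1 - x2)^2 + (y1 - y2)^2 := Real.sq_sqrt (by positivity)
      nlinarith [sq_abs (s - t), sq_abs (x1 - x2), sq_abs (y1 - y2)]
    calc Real.sqrt (|γ s 0 - γ t 0| ^ 2 + |γ s 1 - γ t 1| ^ 2)
        ≤ Real.sqrt ((3 * Real.sqrt ((x1 - x2)^2 + (y1 - y2)^2) * |s - t|) ^ 2) :=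
          Real.sqrt_le_sqrt key
      _ = 3 * Real.sqrt ((x1 - x2)^2 + (y1 - y2)^2) * |s - t| :=
          Real.sqrt_sq (by positivity)
  -- endpoints
  have hstart : γ 0 = p := by
    ext i
    fin_cases i
    · show γ 0 0 = p 0
      rw [hγ, path_apply0, clamp_of_nonpos (by norm_num)]
      rw [hX1]; ring
    · show γ 0 1 = p 1
      rw [hγ, path_apply1, clamp_of_nonpos (show (3:ℝ)*0 ≤ 0 by norm_num),
        clamp_of_nonpos (show (3:ℝ)*0 - 2 ≤ 0 by norm_num)]
      ring_nf
      exact hY1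
  have hend : γ 1 = q := by
    ext i
    fin_cases i
    · show γ 1 0 = q 0
      rw [hγ, path_apply0, clamp_of_one_le (by norm_num)]
      rw [hX2]; ring
    · show γ 1 1 = q 1
      rw [hγ, path_apply1, clamp_of_one_le (by norm_num : (1:ℝ) ≤ 3*1),
        clamp_of_one_le (by norm_num : (1:ℝ) ≤ 3*1 - 2)]
      ring_nf
      exact hY2
  -- membership
  have hmem : ∀ t ∈ Set.Icc (0:ℝ) 1, γ t ∈ holderTriangle α := fun t _ =>
    path_mem hα0 hx1a hx1b hy1b hx2a hx2b hy2b hm0 t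
  -- variation bound
  have hvar : eVariationOn γ (Set.Icc 0 1) ≤ (K : ENNReal) := by
    have hid : eVariationOn (id : ℝ → ℝ) (Set.Icc 0 1) ≤ 1 := by
      have h := (monotoneOn_id (s := Set.Icc (0:ℝ) 1)).eVariationOn_le
        (a := 0) (b := 1) (by simp) (by simp)
      rw [Set.inter_self] at h
      simpa using h
    calc eVariationOn γ (Set.Icc 0 1)
        = eVariationOn (γ ∘ id) (Set.Icc 0 1) := rfl
      _ ≤ (K : ENNReal) * eVariationOn (id : ℝ → ℝ) (Set.Icc 0 1) :=
          (hlip.lipschitzOnWith (s := Set.univ)).comp_eVariationOn_le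
            (Set.mapsTo_univ _ _)
      _ ≤ (K : ENNReal) * 1 := mul_le_mul_right hid _
      _ = (K : ENNReal) := mul_one _
  have hcoe : (K : ENNReal) = ENNReal.ofReal (3 * ‖p - q‖) := by
    rw [ENNReal.ofReal_mul (by norm_num), ← coe_nnnorm, ENNReal.ofReal_coe_nnreal, hK]
    norm_num
  calc innerDist (holderTriangle α) p q
      ≤ eVariationOn γ (Set.Icc 0 1) :=
        iInf_le (fun g : {g : ℝ → EuclideanSpace ℝ (Fin 2) //
            g 0 = p ∧ g 1 = q ∧ ContinuousOn g (Set.Icc 0 1) ∧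
            ∀ t ∈ Set.Icc (0:ℝ) 1, g t ∈ holderTriangle α} =>
          eVariationOn g.1 (Set.Icc 0 1))
          ⟨γ, hstart, hend, hlip.continuous.continuousOn, hmem⟩
    _ ≤ (K : ENNReal) := hvar
    _ = ENNReal.ofReal (3 * ‖p - q‖) := hcoe
end

section
/- Let K ⊆ S^{n−1} be a compact C¹ submanifold (e.g., a smooth knot in S³ when n = 4). Then the cone Tr(K) = {t·v : v ∈ K, 0 ≤ t ≤ 1} over K with vertex at the origin is Lipschitz normally embedded at 0. -/
/-- The truncated cone `Tr(K) = {t·v : v ∈ K, 0 ≤ t ≤ 1}` over `K` with vertex `0`. -/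
def coneOver {n : ℕ} (K : Set (EuclideanSpace ℝ (Fin n))) : Set (EuclideanSpace ℝ (Fin n)) :=
  {z | ∃ t ∈ Set.Icc (0:ℝ) 1, ∃ v ∈ K, z = t • v}

open NNReal

open Set Metric NNReal
lemma lipOn_weaken {α β : Type*} [PseudoEMetricSpace α] [PseudoEMetricSpace β]
    {K K' : ℝ≥0} {f : α → β} {s : Set α}
    (h : LipschitzOnWith K f s) (hK : K ≤ K') : LipschitzOnWith K' f s :=
  fun x hx y hy => (h hx hy).trans (mul_left_mono (ENNReal.coe_le_coe.2 hK))

lemma eVar_le_of_lip {n : ℕ} {γ : ℝ → EuclideanSpace ℝ (Fin n)} {L : ℝ≥0}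
    (hγ : LipschitzOnWith L γ (Set.Icc 0 1)) :
    eVariationOn γ (Set.Icc 0 1) ≤ (L : ENNReal) := by
  have hid : eVariationOn (id : ℝ → ℝ) (Set.Icc 0 1) ≤ 1 := by
    have := MonotoneOn.eVariationOn_le (f := (id : ℝ → ℝ)) (s := Set.Icc (0:ℝ) 1)
      (fun a _ b _ hab => hab) (a := 0) (b := 1) (by simp) (by simp [zero_le_one])
    simpa using this
  have h2 := hγ.comp_eVariationOn_le (g := (id : ℝ → ℝ)) (s := Set.Icc 0 1)
    (Set.mapsTo_id _)
  calc eVariationOn γ (Set.Icc 0 1) = eVariationOn (γ ∘ id) (Set.Icc 0 1) := rfl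
    _ ≤ (L : ENNReal) * eVariationOn (id : ℝ → ℝ) (Set.Icc 0 1) := h2
    _ ≤ (L : ENNReal) * 1 := mul_right_mono hid
    _ = L := mul_one _

lemma innerDist_le_of_path {n : ℕ} {X : Set (EuclideanSpace ℝ (Fin n))}
    {x y : EuclideanSpace ℝ (Fin n)} {c : ℝ}
    (γ : ℝ → EuclideanSpace ℝ (Fin n)) (h0 : γ 0 = x) (h1 : γ 1 = y)
    (hmem : ∀ t ∈ Set.Icc (0:ℝ) 1, γ t ∈ X)
    (hlip : LipschitzOnWith (Real.toNNReal c) γ (Set.Icc 0 1)) :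
    innerDist X x y ≤ ENNReal.ofReal c := by
  have h := iInf_le (fun γ' : {γ : ℝ → EuclideanSpace ℝ (Fin n) //
      γ 0 = x ∧ γ 1 = y ∧ ContinuousOn γ (Set.Icc 0 1) ∧ ∀ t ∈ Set.Icc (0:ℝ) 1, γ t ∈ X} =>
      eVariationOn γ'.1 (Set.Icc 0 1)) ⟨γ, h0, h1, hlip.continuousOn, hmem⟩
  exact h.trans (eVar_le_of_lip hlip)

/-- Concatenation of two paths, each parametrized on `[0,1]`. -/
noncomputable def pcat {n : ℕ} (γ₁ γ₂ : ℝ → EuclideanSpace ℝ (Fin n)) :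
    ℝ → EuclideanSpace ℝ (Fin n) :=
  fun u => if u ≤ 1/2 then γ₁ (2*u) else γ₂ (2*u - 1)

lemma pcat_zero {n : ℕ} (γ₁ γ₂ : ℝ → EuclideanSpace ℝ (Fin n)) :
    pcat γ₁ γ₂ 0 = γ₁ 0 := by norm_num [pcat]

lemma pcat_one {n : ℕ} (γ₁ γ₂ : ℝ → EuclideanSpace ℝ (Fin n)) :
    pcat γ₁ γ₂ 1 = γ₂ 1 := by norm_num [pcat]

lemma pcat_mem {n : ℕ} {γ₁ γ₂ : ℝ → EuclideanSpace ℝ (Fin n)}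
    {X : Set (EuclideanSpace ℝ (Fin n))}
    (h1 : ∀ u ∈ Set.Icc (0:ℝ) 1, γ₁ u ∈ X) (h2 : ∀ u ∈ Set.Icc (0:ℝ) 1, γ₂ u ∈ X) :
    ∀ u ∈ Set.Icc (0:ℝ) 1, pcat γ₁ γ₂ u ∈ X := by
  intro u hu
  unfold pcat
  split_ifs with h
  · exact h1 _ ⟨by linarith [hu.1], by linarith⟩
  · exact h2 _ ⟨by linarith [not_le.1 h], by linarith [hu.2]⟩

lemma pcat_lip {n : ℕ} {γ₁ γ₂ : ℝ → EuclideanSpace ℝ (Fin n)} {L₁ L₂ : NNReal}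
    (h1 : LipschitzOnWith L₁ γ₁ (Set.Icc 0 1)) (h2 : LipschitzOnWith L₂ γ₂ (Set.Icc 0 1))
    (hm : γ₁ 1 = γ₂ 0) :
    LipschitzOnWith (2*(L₁ + L₂)) (pcat γ₁ γ₂) (Set.Icc 0 1) := by
  rw [lipschitzOnWith_iff_dist_le_mul] at h1 h2 ⊢
  have key : ∀ a ∈ Set.Icc (0:ℝ) 1, ∀ b ∈ Set.Icc (0:ℝ) 1, a ≤ b →
      dist (pcat γ₁ γ₂ a) (pcat γ₁ γ₂ b) ≤ (2*(L₁ + L₂) : NNReal) * dist a b := by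
    intro a ha b hb hab
    have hL1 : (0:ℝ) ≤ L₁ := L₁.2
    have hL2 : (0:ℝ) ≤ L₂ := L₂.2
    unfold pcat
    push_cast
    split_ifs with hA hB hB
    · -- both ≤ 1/2
      have := h1 (2*a) ⟨by linarith [ha.1], by linarith⟩ (2*b) ⟨by linarith [hb.1], by linarith⟩
      rw [Real.dist_eq] at this ⊢
      have h2ab : |2*a - 2*b| = 2 * |a - b| := by rw [show 2*a-2*b = 2*(a-b) by ring, abs_mul]; norm_num
      nlinarith [abs_nonneg (a - b), dist_nonneg (x := γ₁ (2*a)) (y := γ₁ (2*b))]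
    · -- a ≤ 1/2 < b
      have hb2 : (2*b - 1) ∈ Set.Icc (0:ℝ) 1 := ⟨by linarith [not_le.1 hB], by linarith [hb.2]⟩
      have t1 := h1 (2*a) ⟨by linarith [ha.1], by linarith⟩ 1 ⟨by norm_num, le_refl 1⟩
      have t2 := h2 0 ⟨le_refl 0, by norm_num⟩ (2*b-1) hb2
      have tri : dist (γ₁ (2*a)) (γ₂ (2*b-1)) ≤ dist (γ₁ (2*a)) (γ₁ 1) + dist (γ₂ 0) (γ₂ (2*b-1)) := by
        rw [hm]; exact dist_triangle _ _ _
      rw [Real.dist_eq] at t1 t2 ⊢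
      have e1 : |2*a - 1| = 1 - 2*a := by rw [abs_of_nonpos (by linarith)]; ring
      have e2 : |(0:ℝ) - (2*b-1)| = 2*b - 1 := by rw [abs_of_nonpos (by linarith [not_le.1 hB])]; ring
      have e3 : |a - b| = b - a := by rw [abs_of_nonpos (by linarith)]; ring
      rw [e1] at t1; rw [e2] at t2; rw [e3]
      nlinarith
    · linarith [not_le.1 hA]
    · -- both > 1/2
      have := h2 (2*a-1) ⟨by linarith [not_le.1 hA], by linarith [ha.2]⟩ (2*b-1)
        ⟨by linarith [not_le.1 hB], by linarith [hb.2]⟩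
      rw [Real.dist_eq] at this ⊢
      have h2ab : |2*a - 1 - (2*b - 1)| = 2 * |a - b| := by
        rw [show 2*a-1-(2*b-1) = 2*(a-b) by ring, abs_mul]; norm_num
      nlinarith [abs_nonneg (a - b), dist_nonneg (x := γ₂ (2*a-1)) (y := γ₂ (2*b-1))]
  intro a ha b hb
  rcases le_total a b with h | h
  · exact key a ha b hb h
  · rw [dist_comm, dist_comm a b]; exact key b hb a ha h

set_option maxHeartbeats 2000000 in
open Set Metric Module in
lemma chart_lemma {n m : ℕ} {K : Set (EuclideanSpace ℝ (Fin n))}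
    {p : EuclideanSpace ℝ (Fin n)} {U : Set (EuclideanSpace ℝ (Fin n))}
    {f : EuclideanSpace ℝ (Fin n) → EuclideanSpace ℝ (Fin m)}
    (hU : IsOpen U) (hpU : p ∈ U) (hf : ContDiff ℝ 1 f)
    (hKf : ∀ y ∈ U, (y ∈ K ↔ f y = 0)) (hp : p ∈ K)
    (hsurj : Function.Surjective (fderiv ℝ f p)) :
    ∃ r > 0, ∃ C : NNReal, ∀ v ∈ K ∩ Metric.ball p r, ∀ w ∈ K ∩ Metric.ball p r,
      ∃ γ : ℝ → EuclideanSpace ℝ (Fin n), γ 0 = v ∧ γ 1 = w ∧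
        (∀ u ∈ Set.Icc (0:ℝ) 1, γ u ∈ K) ∧
        LipschitzOnWith (C * ‖v - w‖₊) γ (Set.Icc 0 1) := by
  classical
  set Df := fderiv ℝ f p with hDf
  set T : Submodule ℝ (EuclideanSpace ℝ (Fin n)) := LinearMap.ker (Df : EuclideanSpace ℝ (Fin n) →ₗ[ℝ] EuclideanSpace ℝ (Fin m)) with hT
  set P : EuclideanSpace ℝ (Fin n) →L[ℝ] ↥T := Submodule.orthogonalProjection T with hP
  set Lmap : EuclideanSpace ℝ (Fin n) →L[ℝ] ↥T × EuclideanSpace ℝ (Fin m) := P.prod Df with hLmap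
  have hPle : ∀ z : EuclideanSpace ℝ (Fin n), ‖P z‖ ≤ ‖z‖ := by
    intro z
    calc ‖P z‖ ≤ ‖P‖ * ‖z‖ := P.le_opNorm z
      _ ≤ 1 * ‖z‖ := by
          have := Submodule.orthogonalProjection_norm_le T
          exact mul_le_mul_of_nonneg_right this (norm_nonneg z)
      _ = ‖z‖ := one_mul _
  -- injectivity
  have hinj : Function.Injective Lmap := by
    have h0 : ∀ e : EuclideanSpace ℝ (Fin n), Lmap e = 0 → e = 0 := by
      intro e he
      have h1 : P e = 0 := congrArg Prod.fst he
      have h2 : Df e = 0 := congrArg Prod.snd he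
      have heT : e ∈ T := LinearMap.mem_ker.2 h2
      have h3 : P e = ⟨e, heT⟩ := Submodule.orthogonalProjection_mem_subspace_eq_self (K := T) ⟨e, heT⟩
      rw [h3] at h1
      exact Subtype.ext_iff.1 h1
    intro a b hab
    exact sub_eq_zero.1 (h0 (a - b) (by rw [map_sub, hab, sub_self]))
  -- dimension count
  have hdim : finrank ℝ (EuclideanSpace ℝ (Fin n)) = finrank ℝ (↥T × EuclideanSpace ℝ (Fin m)) := by
    have hrn := LinearMap.finrank_range_add_finrank_ker (Df : EuclideanSpace ℝ (Fin n) →ₗ[ℝ] EuclideanSpace ℝ (Fin m))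
    have hrange : LinearMap.range (Df : EuclideanSpace ℝ (Fin n) →ₗ[ℝ] EuclideanSpace ℝ (Fin m)) = ⊤ := by
      rw [LinearMap.range_eq_top]
      exact hsurj
    rw [hrange] at hrn
    rw [finrank_top] at hrn
    have hker : LinearMap.ker (Df : EuclideanSpace ℝ (Fin n) →ₗ[ℝ] EuclideanSpace ℝ (Fin m)) = T := rfl
    rw [hker] at hrn
    rw [finrank_prod]
    omega
  set eL : EuclideanSpace ℝ (Fin n) ≃L[ℝ] ↥T × EuclideanSpace ℝ (Fin m) :=
    (Lmap.toLinearMap.linearEquivOfInjective hinj hdim).toContinuousLinearEquiv with heL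
  have hcoeL : (eL : EuclideanSpace ℝ (Fin n) →L[ℝ] ↥T × EuclideanSpace ℝ (Fin m)) = Lmap := by
    refine ContinuousLinearMap.ext fun e => ?_
    show eL e = Lmap e
    have h2 : eL e = Lmap.toLinearMap.linearEquivOfInjective hinj hdim e := by
      rw [heL]; rfl
    rw [h2, LinearMap.linearEquivOfInjective_apply]
    rfl
  -- the map g and its inverse
  set g : EuclideanSpace ℝ (Fin n) → ↥T × EuclideanSpace ℝ (Fin m) := fun y => (P y, f y) with hg
  have hgstrict : HasStrictFDerivAt g (eL : EuclideanSpace ℝ (Fin n) →L[ℝ] ↥T × EuclideanSpace ℝ (Fin m)) p := by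
    rw [hcoeL, hLmap]
    exact HasStrictFDerivAt.prodMk (P.hasStrictFDerivAt) ((hf.contDiffAt).hasStrictFDerivAt one_ne_zero)
  set h : ↥T × EuclideanSpace ℝ (Fin m) → EuclideanSpace ℝ (Fin n) := hgstrict.localInverse g eL p with hh
  obtain ⟨M, tset, htset, hMlip⟩ := hgstrict.to_localInverse.exists_lipschitzOnWith
  have hgp : h (g p) = p := hgstrict.localInverse_apply_image
  have hUh : h ⁻¹' U ∈ nhds (g p) := by
    have : ContinuousAt h (g p) := hgstrict.localInverse_continuousAt
    exact this.preimage_mem_nhds (by rw [hgp]; exact hU.mem_nhds hpU)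
  have hWn : tset ∩ {z | g (h z) = z} ∩ h ⁻¹' U ∈ nhds (g p) := by
    refine Filter.inter_mem (Filter.inter_mem htset ?_) hUh
    exact hgstrict.eventually_right_inverse
  obtain ⟨ρ, hρ0, hρ⟩ := Metric.mem_nhds_iff.1 hWn
  have hVn : U ∩ {y | h (g y) = y} ∈ nhds p :=
    Filter.inter_mem (hU.mem_nhds hpU) hgstrict.eventually_left_inverse
  obtain ⟨r0, hr00, hr0⟩ := Metric.mem_nhds_iff.1 hVn
  refine ⟨min r0 ρ, lt_min hr00 hρ0, M, ?_⟩
  rintro v ⟨hvK, hvb⟩ w ⟨hwK, hwb⟩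
  have hvb' : v ∈ Metric.ball p r0 := Metric.ball_subset_ball (min_le_left _ _) hvb
  have hwb' : w ∈ Metric.ball p r0 := Metric.ball_subset_ball (min_le_left _ _) hwb
  have hvV := hr0 hvb'
  have hwV := hr0 hwb'
  have hfv : f v = 0 := (hKf v hvV.1).1 hvK
  have hfw : f w = 0 := (hKf w hwV.1).1 hwK
  have hfp : f p = 0 := (hKf p hpU).1 hp
  -- norm bound for g on K points
  have hgnorm : ∀ a b : EuclideanSpace ℝ (Fin n), f a = 0 → f b = 0 → ‖g a - g b‖ ≤ ‖a - b‖ := by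
    intro a b ha hb
    have : g a - g b = (P a - P b, (0:EuclideanSpace ℝ (Fin m))) := by
      simp [hg, ha, hb, Prod.ext_iff]
    rw [this, Prod.norm_def]
    simp only [norm_zero]
    rw [max_eq_left (norm_nonneg _)]
    rw [← map_sub]
    exact hPle _
  have hgv : ‖g v - g p‖ < ρ := by
    calc ‖g v - g p‖ ≤ ‖v - p‖ := hgnorm v p hfv hfp
      _ < min r0 ρ := by rwa [Metric.mem_ball, dist_eq_norm] at hvb
      _ ≤ ρ := min_le_right _ _
  have hgw : ‖g w - g p‖ < ρ := by
    calc ‖g w - g p‖ ≤ ‖w - p‖ := hgnorm w p hfw hfp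
      _ < min r0 ρ := by rwa [Metric.mem_ball, dist_eq_norm] at hwb
      _ ≤ ρ := min_le_right _ _
  -- the segment in chart coordinates
  set seg : ℝ → ↥T × EuclideanSpace ℝ (Fin m) := fun u => g v + u • (g w - g v) with hseg
  have hsegmem : ∀ u ∈ Set.Icc (0:ℝ) 1, seg u ∈ Metric.ball (g p) ρ := by
    intro u hu
    rw [Metric.mem_ball, dist_eq_norm]
    have hrw : seg u - g p = (1 - u) • (g v - g p) + u • (g w - g p) := by
      simp only [hseg]
      module
    rw [hrw]
    calc ‖(1 - u) • (g v - g p) + u • (g w - g p)‖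
        ≤ ‖(1 - u) • (g v - g p)‖ + ‖u • (g w - g p)‖ := norm_add_le _ _
      _ = (1 - u) * ‖g v - g p‖ + u * ‖g w - g p‖ := by
          rw [norm_smul, norm_smul, Real.norm_eq_abs, Real.norm_eq_abs,
            abs_of_nonneg (by linarith [hu.2]), abs_of_nonneg hu.1]
      _ ≤ max ‖g v - g p‖ ‖g w - g p‖ := by
          have hA := norm_nonneg (g v - g p)
          have hB := norm_nonneg (g w - g p)
          have h1 := le_max_left ‖g v - g p‖ ‖g w - g p‖
          have h2 := le_max_right ‖g v - g p‖ ‖g w - g p‖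
          nlinarith [hu.1, hu.2]
      _ < ρ := max_lt hgv hgw
  -- the path
  refine ⟨fun u => h (seg u), ?_, ?_, ?_, ?_⟩
  · show h (seg 0) = v
    have h0 : seg 0 = g v := by
      rw [hseg]
      show g v + (0:ℝ) • (g w - g v) = g v
      rw [zero_smul, add_zero]
    rw [h0]; exact hvV.2
  · show h (seg 1) = w
    have h1 : seg 1 = g w := by
      rw [hseg]
      show g v + (1:ℝ) • (g w - g v) = g w
      rw [one_smul]; abel
    rw [h1]; exact hwV.2
  · intro u hu
    have hz := hρ (hsegmem u hu)
    have hzright : g (h (seg u)) = seg u := hz.1.2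
    have hzU : h (seg u) ∈ U := hz.2
    have hsnd : (seg u).2 = 0 := by
      simp [hseg, hg, hfv, hfw]
    refine (hKf _ hzU).2 ?_
    have : f (h (seg u)) = (g (h (seg u))).2 := rfl
    rw [this, hzright, hsnd]
  · -- Lipschitz bound
    have hseglip : LipschitzWith ‖g w - g v‖₊ seg := by
      refine LipschitzWith.of_dist_le_mul ?_
      intro a b
      simp only [hseg]
      rw [dist_eq_norm]
      have : g v + a • (g w - g v) - (g v + b • (g w - g v)) = (a - b) • (g w - g v) := by
        module
      rw [this, norm_smul, Real.norm_eq_abs, ← Real.dist_eq, dist_comm]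
      rw [coe_nnnorm, dist_comm]
      rw [Real.dist_eq, mul_comm]
    have hmaps : Set.MapsTo seg (Set.Icc 0 1) tset := by
      intro u hu
      exact (hρ (hsegmem u hu)).1.1
    have hcomp : LipschitzOnWith (M * ‖g w - g v‖₊) (h ∘ seg) (Set.Icc 0 1) :=
      hMlip.comp (hseglip.lipschitzOnWith) hmaps
    refine lipOn_weaken hcomp ?_
    refine mul_le_mul_right ?_ M
    have h1 : ‖g w - g v‖ ≤ ‖w - v‖ := hgnorm w v hfw hfv
    have h2 : ‖w - v‖ = ‖v - w‖ := norm_sub_rev _ _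
    rw [← NNReal.coe_le_coe]
    simpa [coe_nnnorm] using h1.trans (le_of_eq h2)

lemma radial_lip {n : ℕ} (a b : ℝ) (v : EuclideanSpace ℝ (Fin n)) :
    LipschitzWith (Real.toNNReal (|b - a| * ‖v‖)) (fun u : ℝ => (a + u*(b-a)) • v) := by
  refine LipschitzWith.of_dist_le_mul ?_
  intro x y
  have h1 : (a + x*(b-a)) • v - (a + y*(b-a)) • v = ((x - y)*(b-a)) • v := by
    rw [← sub_smul]; congr 1; ring
  rw [dist_eq_norm, h1, norm_smul, Real.norm_eq_abs, abs_mul, Real.dist_eq,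
    Real.coe_toNNReal _ (by positivity)]
  ring_nf
  exact le_rfl

lemma smul_lip {n : ℕ} {γ : ℝ → EuclideanSpace ℝ (Fin n)} {L : NNReal} {s : ℝ} (hs : 0 ≤ s)
    (h : LipschitzOnWith L γ (Set.Icc 0 1)) :
    LipschitzOnWith (Real.toNNReal s * L) (fun u => s • γ u) (Set.Icc 0 1) := by
  rw [lipschitzOnWith_iff_dist_le_mul] at h ⊢
  intro x hx y hy
  rw [dist_smul₀, Real.norm_eq_abs, abs_of_nonneg hs]
  push_cast
  rw [Real.coe_toNNReal _ hs, mul_assoc]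
  exact mul_le_mul_of_nonneg_left (h x hx y hy) hs

lemma coeff_mem {a b u : ℝ} (ha : a ∈ Set.Icc (0:ℝ) 1) (hb : b ∈ Set.Icc (0:ℝ) 1)
    (hu : u ∈ Set.Icc (0:ℝ) 1) : a + u*(b-a) ∈ Set.Icc (0:ℝ) 1 := by
  obtain ⟨ha0, ha1⟩ := ha; obtain ⟨hb0, hb1⟩ := hb; obtain ⟨hu0, hu1⟩ := hu
  constructor <;> nlinarith

lemma far_bound_aux {n : ℕ} {v w : EuclideanSpace ℝ (Fin n)} (hv : ‖v‖ = 1) (hw : ‖w‖ = 1)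
    {δ t s : ℝ} (hδ0 : 0 < δ) (hδ1 : δ ≤ 1) (hd : δ ≤ ‖v - w‖)
    (ht0 : 0 ≤ t) (hts : t ≤ s) :
    t + s ≤ 8/δ * ‖t • v - s • w‖ := by
  set N := ‖t • v - s • w‖ with hN
  have hs0 : 0 ≤ s := ht0.trans hts
  have hA : s - t ≤ N := by
    have h1 := norm_sub_norm_le (s • w) (t • v)
    rw [norm_smul, norm_smul, Real.norm_eq_abs, Real.norm_eq_abs,
      abs_of_nonneg hs0, abs_of_nonneg ht0, hv, hw, mul_one, mul_one] at h1
    rw [hN, norm_sub_rev]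
    exact h1
  have hB : t * ‖v - w‖ - (s - t) ≤ N := by
    have h1 : ‖t • v - t • w‖ ≤ ‖t • v - s • w‖ + ‖s • w - t • w‖ := by
      have := norm_sub_le_norm_sub_add_norm_sub (t • v) (s • w) (t • w)
      exact this
    have h2 : ‖t • v - t • w‖ = t * ‖v - w‖ := by
      rw [← smul_sub, norm_smul, Real.norm_eq_abs, abs_of_nonneg ht0]
    have h3 : ‖s • w - t • w‖ = s - t := by
      rw [← sub_smul, norm_smul, Real.norm_eq_abs, abs_of_nonneg (by linarith), hw, mul_one]
    rw [h2, h3] at h1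
    linarith
  have hN0 : 0 ≤ N := norm_nonneg _
  rw [div_mul_eq_mul_div, le_div_iff₀ hδ0]
  have hprod : t * δ ≤ t * ‖v - w‖ := mul_le_mul_of_nonneg_left hd ht0
  nlinarith [mul_nonneg (sub_nonneg.2 hts) (sub_nonneg.2 hδ1)]

lemma far_bound {n : ℕ} {v w : EuclideanSpace ℝ (Fin n)} (hv : ‖v‖ = 1) (hw : ‖w‖ = 1)
    {δ t s : ℝ} (hδ0 : 0 < δ) (hδ1 : δ ≤ 1) (hd : δ ≤ ‖v - w‖)
    (ht0 : 0 ≤ t) (hs0 : 0 ≤ s) :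
    t + s ≤ 8/δ * ‖t • v - s • w‖ := by
  rcases le_total t s with h | h
  · exact far_bound_aux hv hw hδ0 hδ1 hd ht0 h
  · have hd' : δ ≤ ‖w - v‖ := by rwa [norm_sub_rev]
    have := far_bound_aux hw hv hδ0 hδ1 hd' hs0 h
    rw [norm_sub_rev] at this
    linarith

open Set Metric in
lemma uniform_local {n d : ℕ} (K : Set (EuclideanSpace ℝ (Fin n)))
    (hK : IsCompact K)
    (hsub : ∀ x ∈ K, ∃ (U : Set (EuclideanSpace ℝ (Fin n)))
      (f : EuclideanSpace ℝ (Fin n) → EuclideanSpace ℝ (Fin (n - d))),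
      IsOpen U ∧ x ∈ U ∧ ContDiff ℝ 1 f ∧ (∀ y ∈ U, (y ∈ K ↔ f y = 0)) ∧
      Function.Surjective (fderiv ℝ f x))
    (hne : K.Nonempty) :
    ∃ δ : ℝ, 0 < δ ∧ ∃ C0 : NNReal, ∀ v ∈ K, ∀ w ∈ K, dist v w < δ →
      ∃ γ : ℝ → EuclideanSpace ℝ (Fin n), γ 0 = v ∧ γ 1 = w ∧
        (∀ u ∈ Set.Icc (0:ℝ) 1, γ u ∈ K) ∧
        LipschitzOnWith (C0 * ‖v - w‖₊) γ (Set.Icc 0 1) := by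
  classical
  have hch : ∀ p : K, ∃ r > 0, ∃ C : NNReal,
      ∀ v ∈ K ∩ Metric.ball (p : EuclideanSpace ℝ (Fin n)) r,
      ∀ w ∈ K ∩ Metric.ball (p : EuclideanSpace ℝ (Fin n)) r,
      ∃ γ : ℝ → EuclideanSpace ℝ (Fin n), γ 0 = v ∧ γ 1 = w ∧
        (∀ u ∈ Set.Icc (0:ℝ) 1, γ u ∈ K) ∧
        LipschitzOnWith (C * ‖v - w‖₊) γ (Set.Icc 0 1) := by
    intro p
    obtain ⟨U, f, hU, hpU, hf, hKf, hsurj⟩ := hsub p p.2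
    exact chart_lemma hU hpU hf hKf p.2 hsurj
  choose rr hrr CC hCC using hch
  have hcov : K ⊆ ⋃ p : K, Metric.ball (p : EuclideanSpace ℝ (Fin n)) (rr p / 2) := by
    intro x hx
    exact Set.mem_iUnion.2 ⟨⟨x, hx⟩, by simpa using half_pos (hrr ⟨x, hx⟩)⟩
  obtain ⟨t, ht⟩ := hK.elim_finite_subcover
    (fun p : K => Metric.ball (p : EuclideanSpace ℝ (Fin n)) (rr p / 2))
    (fun p => Metric.isOpen_ball) hcov
  have htne : t.Nonempty := by
    obtain ⟨x, hx⟩ := hne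
    obtain ⟨i, hit, _⟩ := Set.mem_iUnion₂.1 (ht hx)
    exact ⟨i, hit⟩
  refine ⟨t.inf' htne (fun i => rr i / 2), ?_, t.sup (fun i => CC i), ?_⟩
  · rw [Finset.lt_inf'_iff]
    exact fun i _ => half_pos (hrr i)
  · intro v hv w hw hdist
    obtain ⟨i, hit, hvb⟩ := Set.mem_iUnion₂.1 (ht hv)
    have hδi : t.inf' htne (fun i => rr i / 2) ≤ rr i / 2 := Finset.inf'_le _ hit
    have hwb : w ∈ Metric.ball (i : EuclideanSpace ℝ (Fin n)) (rr i) := by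
      rw [Metric.mem_ball] at hvb ⊢
      calc dist w (i : EuclideanSpace ℝ (Fin n)) ≤ dist w v + dist v i := dist_triangle _ _ _
        _ < rr i / 2 + rr i / 2 := by
            rw [dist_comm w v]
            exact add_lt_add (lt_of_lt_of_le hdist hδi) hvb
        _ = rr i := by ring
    have hvb' : v ∈ Metric.ball (i : EuclideanSpace ℝ (Fin n)) (rr i) :=
      Metric.ball_subset_ball (by linarith [hrr i]) hvb
    obtain ⟨γ, h0, h1, hmem, hlip⟩ := hCC i v ⟨hv, hvb'⟩ w ⟨hw, hwb⟩
    exact ⟨γ, h0, h1, hmem, lipOn_weaken hlip (mul_le_mul_left (Finset.le_sup hit) _)⟩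

/-- If `K ⊆ Sⁿ⁻¹` is a compact `C¹` submanifold (of some dimension `d`, expressed by local
`C¹` defining functions with surjective differential), then the cone over `K` with vertex at
the origin is Lipschitz normally embedded at `0`. -/
theorem cone_over_smooth_compact_LNE_at_zero {n d : ℕ}
    (K : Set (EuclideanSpace ℝ (Fin n)))
    (hKs : K ⊆ Metric.sphere 0 1) (hK : IsCompact K)
    (hsub : ∀ x ∈ K, ∃ (U : Set (EuclideanSpace ℝ (Fin n)))
      (f : EuclideanSpace ℝ (Fin n) → EuclideanSpace ℝ (Fin (n - d))),
      IsOpen U ∧ x ∈ U ∧ ContDiff ℝ 1 f ∧ (∀ y ∈ U, (y ∈ K ↔ f y = 0)) ∧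
      Function.Surjective (fderiv ℝ f x)) :
    ∃ (U : Set (EuclideanSpace ℝ (Fin n))) (C : ℝ),
      U ∈ nhds (0 : EuclideanSpace ℝ (Fin n)) ∧ 1 ≤ C ∧
      ∀ x ∈ coneOver K ∩ U, ∀ y ∈ coneOver K ∩ U,
        innerDist (coneOver K ∩ U) x y ≤ ENNReal.ofReal (C * ‖x - y‖) := by
  classical
  rcases Set.eq_empty_or_nonempty K with hKe | hne
  · refine ⟨Set.univ, 1, Filter.univ_mem, le_refl 1, ?_⟩
    rintro x ⟨⟨t, _, v, hv, rfl⟩, -⟩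
    rw [hKe] at hv
    exact absurd hv (Set.notMem_empty v)
  obtain ⟨δ0, hδ00, C0, hC0⟩ := uniform_local K hK hsub hne
  set δ : ℝ := min δ0 1 with hδdef
  have hδ0 : 0 < δ := lt_min hδ00 one_pos
  have hδ1 : δ ≤ 1 := min_le_right _ _
  set C : ℝ := max (2 + 4*(C0:ℝ)) (16/δ) with hCdef
  have hC0' : (0:ℝ) ≤ (C0:ℝ) := C0.2
  have hC1 : 1 ≤ C := le_trans (by linarith) (le_max_left _ _)
  refine ⟨Set.univ, C, Filter.univ_mem, hC1, ?_⟩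
  rintro x ⟨hx, -⟩ y ⟨hy, -⟩
  obtain ⟨t, ht, v, hv, rfl⟩ := hx
  obtain ⟨s, hs, w, hw, rfl⟩ := hy
  have hvn : ‖v‖ = 1 := by
    have := hKs hv; rwa [mem_sphere_zero_iff_norm] at this
  have hwn : ‖w‖ = 1 := by
    have := hKs hw; rwa [mem_sphere_zero_iff_norm] at this
  set N : ℝ := ‖t • v - s • w‖ with hNdef
  have hN0 : 0 ≤ N := norm_nonneg _
  have hcN : 0 ≤ C * N := mul_nonneg (by linarith) hN0
  have hts_le : |t - s| ≤ N := by
    have h := abs_norm_sub_norm_le (t • v) (s • w)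
    rwa [norm_smul, norm_smul, Real.norm_eq_abs, Real.norm_eq_abs,
      abs_of_nonneg ht.1, abs_of_nonneg hs.1, hvn, hwn, mul_one, mul_one] at h
  by_cases hfar : δ ≤ ‖v - w‖
  · -- far apart: go through the vertex 0
    have hfb := far_bound hvn hwn hδ0 hδ1 hfar ht.1 hs.1
    set γ₁ : ℝ → EuclideanSpace ℝ (Fin n) := fun u => (t + u*(0-t)) • v with hγ₁
    set γ₂ : ℝ → EuclideanSpace ℝ (Fin n) := fun u => (0 + u*(s-0)) • w with hγ₂
    have hmatch : γ₁ 1 = γ₂ 0 := by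
      rw [hγ₁, hγ₂]
      show (t + 1*(0-t)) • v = (0 + 0*(s-0)) • w
      have e1 : t + 1*(0-t) = 0 := by ring
      have e2 : (0:ℝ) + 0*(s-0) = 0 := by ring
      rw [e1, e2, zero_smul, zero_smul]
    have hlip := pcat_lip (γ₁ := γ₁) (γ₂ := γ₂)
      ((radial_lip t 0 v).lipschitzOnWith) ((radial_lip 0 s w).lipschitzOnWith) hmatch
    refine innerDist_le_of_path (pcat γ₁ γ₂) ?_ ?_ ?_ ?_
    · rw [pcat_zero, hγ₁]
      show (t + 0*(0-t)) • v = t • v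
      norm_num
    · rw [pcat_one, hγ₂]
      show (0 + 1*(s-0)) • w = s • w
      norm_num
    · refine pcat_mem ?_ ?_
      · intro u hu
        refine ⟨⟨t + u*(0-t), coeff_mem ht (by norm_num) hu, v, hv, rfl⟩, trivial⟩
      · intro u hu
        refine ⟨⟨0 + u*(s-0), coeff_mem (by norm_num) hs hu, w, hw, rfl⟩, trivial⟩
    · refine lipOn_weaken hlip ?_
      rw [← NNReal.coe_le_coe]
      push_cast
      rw [Real.coe_toNNReal _ hcN,
        Real.coe_toNNReal _ (by positivity), Real.coe_toNNReal _ (by positivity)]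
      rw [hvn, hwn, mul_one, mul_one]
      have e1 : |(0:ℝ) - t| = t := by rw [zero_sub, abs_neg, abs_of_nonneg ht.1]
      have e2 : |s - (0:ℝ)| = s := by rw [sub_zero, abs_of_nonneg hs.1]
      rw [e1, e2]
      have h16 : 16/δ ≤ C := le_max_right _ _
      have : 16/δ * N ≤ C * N := mul_le_mul_of_nonneg_right h16 hN0
      calc 2 * (t + s) ≤ 2 * (8/δ * N) := by linarith
        _ = 16/δ * N := by ring
        _ ≤ C * N := this
  · -- nearby: radial move then scaled path inside K
    push_neg at hfar
    have hdist : dist v w < δ0 := by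
      rw [dist_eq_norm]
      exact lt_of_lt_of_le hfar (min_le_left _ _)
    obtain ⟨γK, hK0, hK1, hKmem, hKlip⟩ := hC0 v hv w hw hdist
    set γ₁ : ℝ → EuclideanSpace ℝ (Fin n) := fun u => (t + u*(s-t)) • v with hγ₁
    set γ₂ : ℝ → EuclideanSpace ℝ (Fin n) := fun u => s • γK u with hγ₂
    have hmatch : γ₁ 1 = γ₂ 0 := by
      rw [hγ₁, hγ₂]
      show (t + 1*(s-t)) • v = s • γK 0
      rw [hK0]
      congr 1
      ring
    have hlip := pcat_lip (γ₁ := γ₁) (γ₂ := γ₂)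
      ((radial_lip t s v).lipschitzOnWith) (smul_lip hs.1 hKlip) hmatch
    refine innerDist_le_of_path (pcat γ₁ γ₂) ?_ ?_ ?_ ?_
    · rw [pcat_zero, hγ₁]
      show (t + 0*(s-t)) • v = t • v
      norm_num
    · rw [pcat_one, hγ₂]
      show s • γK 1 = s • w
      rw [hK1]
    · refine pcat_mem ?_ ?_
      · intro u hu
        refine ⟨⟨t + u*(s-t), coeff_mem ht hs hu, v, hv, rfl⟩, trivial⟩
      · intro u hu
        refine ⟨⟨s, hs, γK u, hKmem u hu, rfl⟩, trivial⟩
    · refine lipOn_weaken hlip ?_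
      rw [← NNReal.coe_le_coe]
      push_cast
      rw [Real.coe_toNNReal _ hcN,
        Real.coe_toNNReal _ (by positivity), Real.coe_toNNReal _ hs.1]
      rw [hvn, mul_one]
      have e1 : |s - t| ≤ N := by rw [abs_sub_comm]; exact hts_le
      have e2 : s * ‖v - w‖ ≤ 2 * N := by
        have h1 : ‖s • v - s • w‖ = s * ‖v - w‖ := by
          rw [← smul_sub, norm_smul, Real.norm_eq_abs, abs_of_nonneg hs.1]
        have h2 : ‖s • v - s • w‖ ≤ ‖s • v - t • v‖ + ‖t • v - s • w‖ :=
          norm_sub_le_norm_sub_add_norm_sub _ _ _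
        have h3 : ‖s • v - t • v‖ = |s - t| := by
          rw [← sub_smul, norm_smul, Real.norm_eq_abs, hvn, mul_one]
        rw [h1, h3] at h2
        linarith
      have h24 : 2 + 4*(C0:ℝ) ≤ C := le_max_left _ _
      have hmul : (2 + 4*(C0:ℝ)) * N ≤ C * N := mul_le_mul_of_nonneg_right h24 hN0
      have hC0s : (C0:ℝ) * (s * ‖v - w‖) ≤ (C0:ℝ) * (2*N) :=
        mul_le_mul_of_nonneg_left e2 hC0'
      calc 2 * (|s - t| + s * ((C0:ℝ) * ‖v - w‖))
          = 2 * |s - t| + 2 * ((C0:ℝ) * (s * ‖v - w‖)) := by ring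
        _ ≤ 2 * N + 2 * ((C0:ℝ) * (2*N)) := by linarith
        _ = (2 + 4*(C0:ℝ)) * N := by ring
        _ ≤ C * N := hmul
end
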